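/- Let P₀, P_b, s₀, s_b, t₀, t_b be positive reals with t₀ > t_b (interpret: P_x = prior probability of bid vector x, s_x = P(reach stage 2 | x), t_x = P(signal θ | x)). Define r₀ = (P₀ s₀ t₀)/(P₀ s₀ t₀ + P_b s_b t_b) ÷ (P₀ s₀)/(P₀ s₀ + P_b s_b) and r_b analogously with subscript b. Then r₀ > r_b; in particular, it is impossible that both r₀ = 1 and r_b = 1. -/
import Mathlib


/-- core computation of Lemma 1: with P₀, P_b, s₀, s_b, t₀, t_b > 0
and t₀ > t_b, the ratio r₀ of the posterior to the prior probability of the bid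
vector 0 (after observing the signal θ) strictly exceeds the corresponding ratio
r_b; in particular r₀ and r_b cannot both equal 1. -/
theorem signal_changes_posterior
    (P₀ Pb s₀ sb t₀ tb : ℝ)
    (hP₀ : 0 < P₀) (hPb : 0 < Pb) (hs₀ : 0 < s₀) (hsb : 0 < sb)
    (ht₀ : 0 < t₀) (htb : 0 < tb) (ht : tb < t₀) :
    (P₀ * s₀ * t₀ / (P₀ * s₀ * t₀ + Pb * sb * tb)) / (P₀ * s₀ / (P₀ * s₀ + Pb * sb)) >
      (Pb * sb * tb / (P₀ * s₀ * t₀ + Pb * sb * tb)) / (Pb * sb / (P₀ * s₀ + Pb * sb)) ∧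
    ¬ ((P₀ * s₀ * t₀ / (P₀ * s₀ * t₀ + Pb * sb * tb)) / (P₀ * s₀ / (P₀ * s₀ + Pb * sb)) = 1 ∧
       (Pb * sb * tb / (P₀ * s₀ * t₀ + Pb * sb * tb)) / (Pb * sb / (P₀ * s₀ + Pb * sb)) = 1) := by
  have hD : 0 < P₀ * s₀ * t₀ + Pb * sb * tb := by positivity
  have hS : 0 < P₀ * s₀ + Pb * sb := by positivity
  have key : (P₀ * s₀ * t₀ / (P₀ * s₀ * t₀ + Pb * sb * tb)) / (P₀ * s₀ / (P₀ * s₀ + Pb * sb)) >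
      (Pb * sb * tb / (P₀ * s₀ * t₀ + Pb * sb * tb)) / (Pb * sb / (P₀ * s₀ + Pb * sb)) := by
    rw [gt_iff_lt, div_lt_div_iff₀ (by positivity) (by positivity)]
    rw [div_mul_div_comm, div_mul_div_comm, div_lt_div_iff₀ (by positivity) (by positivity)]
    nlinarith [mul_pos (mul_pos (mul_pos (mul_pos hP₀ hs₀) hPb) hsb) (sub_pos.mpr ht),
      mul_pos hD hS]
  exact ⟨key, fun ⟨h1, h2⟩ => absurd (h1.trans h2.symm) (ne_of_gt key)⟩
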